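/- The function k(λ,μ) = −|(λ−μ)/(1−conj(μ)λ)|² + |λ|² + |μ|² is a kernel (positive semi-definite and self-adjoint) on 𝔻 × 𝔻. -/

import Mathlib

open scoped ComplexOrder ComplexConjugate

/-- The squared pseudo-hyperbolic distance on the open unit disk. -/
noncomputable def pseudoHypDistSq (l m : ℂ) : ℝ :=
  ‖(l - m) / (1 - conj m * l)‖ ^ 2

/-- The feature map `λ ↦ (λ^n * conj λ^m)_{(n,m)}` used to expand the Szegő-type kernel. -/
noncomputable def kerF (l : ℂ) (p : ℕ × ℕ) : ℂ := l ^ p.1 * (conj l) ^ p.2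

lemma absmul {l m : ℂ} (hl : ‖l‖ < 1) (hm : ‖m‖ < 1) :
    ‖l * conj m‖ < 1 := by
  rw [norm_mul, Complex.norm_conj]
  nlinarith [norm_nonneg l, norm_nonneg m]

lemma one_sub_ne {x : ℂ} (h : ‖x‖ < 1) : 1 - x ≠ 0 := by
  intro h0
  rw [sub_eq_zero] at h0
  rw [← h0] at h
  simp at h

lemma abs_sq_ofReal (z : ℂ) : ((‖z‖ : ℂ)) ^ 2 = z * conj z := by
  rw [← Complex.ofReal_pow, Complex.sq_norm, Complex.mul_conj]

lemma kerF_summable {l m : ℂ} (hl : ‖l‖ < 1) (hm : ‖m‖ < 1) :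
    Summable (fun p : ℕ × ℕ => kerF l p * conj (kerF m p)) := by
  have h1 := absmul hl hm
  have h2 : ‖conj l * m‖ < 1 := by rw [mul_comm]; exact absmul hm hl
  have hs := summable_mul_of_summable_norm (f := fun n : ℕ => (l * conj m) ^ n)
    (g := fun n : ℕ => (conj l * m) ^ n)
    (by simpa [norm_pow] using summable_geometric_of_lt_one (norm_nonneg _) h1)
    (by simpa [norm_pow] using summable_geometric_of_lt_one (norm_nonneg _) h2)
  refine hs.congr fun p => ?_
  simp only [kerF, mul_pow, map_mul, map_pow, Complex.conj_conj]
  ring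

lemma kerF_tsum {l m : ℂ} (hl : ‖l‖ < 1) (hm : ‖m‖ < 1) :
    ∑' p : ℕ × ℕ, kerF l p * conj (kerF m p)
      = (1 - l * conj m)⁻¹ * (1 - conj l * m)⁻¹ := by
  have h1 := absmul hl hm
  have h2 : ‖conj l * m‖ < 1 := by rw [mul_comm]; exact absmul hm hl
  have ht := tsum_mul_tsum_of_summable_norm (f := fun n : ℕ => (l * conj m) ^ n)
    (g := fun n : ℕ => (conj l * m) ^ n)
    (by simpa [norm_pow] using summable_geometric_of_lt_one (norm_nonneg _) h1)
    (by simpa [norm_pow] using summable_geometric_of_lt_one (norm_nonneg _) h2)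
  rw [tsum_geometric_of_norm_lt_one h1, tsum_geometric_of_norm_lt_one h2] at ht
  refine Eq.trans (tsum_congr fun p => ?_) ht.symm
  simp only [kerF, mul_pow, map_mul, map_pow, Complex.conj_conj]
  ring

/-- Key expansion of the kernel. -/
lemma key {l m : ℂ} (hl : ‖l‖ < 1) (hm : ‖m‖ < 1) :
    ((-pseudoHypDistSq l m + ‖l‖ ^ 2 + ‖m‖ ^ 2 : ℝ) : ℂ)
      = ((‖l‖ : ℂ) ^ 2 * (‖m‖ : ℂ) ^ 2
          - (1 - (‖l‖ : ℂ) ^ 2) * (1 - (‖m‖ : ℂ) ^ 2))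
        + (1 - (‖l‖ : ℂ) ^ 2) * (1 - (‖m‖ : ℂ) ^ 2)
          * ∑' p : ℕ × ℕ, kerF l p * conj (kerF m p) := by
  have hu : (1 : ℂ) - conj m * l ≠ 0 := one_sub_ne (by rw [mul_comm]; exact absmul hl hm)
  have hu' : (1 : ℂ) - l * conj m ≠ 0 := one_sub_ne (absmul hl hm)
  have hv : (1 : ℂ) - conj l * m ≠ 0 := one_sub_ne (by rw [mul_comm]; exact absmul hm hl)
  have hv' : (1 : ℂ) - m * conj l ≠ 0 := one_sub_ne (absmul hm hl)
  rw [kerF_tsum hl hm]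
  have e3 : ((pseudoHypDistSq l m : ℝ) : ℂ)
      = ((l - m) * conj (l - m)) / ((1 - conj m * l) * (1 - m * conj l)) := by
    unfold pseudoHypDistSq
    push_cast
    rw [abs_sq_ofReal, map_div₀, div_mul_div_comm]
    congr 1
    simp [map_sub, map_mul, Complex.conj_conj]
  push_cast
  rw [e3, abs_sq_ofReal, abs_sq_ofReal]
  field_simp
  simp only [map_sub]
  ring

/-- `k(λ,μ) = −d(λ,μ)² + |λ|² + |μ|²` is a kernel (self-adjoint and positive
semi-definite) on the open unit disk `𝔻`. -/
theorem neg_pseudoHypDistSq_add_sq_isKernel :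
    (∀ l m : ℂ, ‖l‖ < 1 → ‖m‖ < 1 →
      ((-pseudoHypDistSq m l + ‖m‖ ^ 2 + ‖l‖ ^ 2 : ℝ) : ℂ) =
        conj ((-pseudoHypDistSq l m + ‖l‖ ^ 2 + ‖m‖ ^ 2 : ℝ) : ℂ)) ∧
    ∀ (n : ℕ) (l : Fin n → ℂ), (∀ i, ‖l i‖ < 1) →
      ∀ c : Fin n → ℂ,
        0 ≤ ∑ i, ∑ j, c i * conj (c j) *
          ((-pseudoHypDistSq (l i) (l j)
            + ‖l i‖ ^ 2 + ‖l j‖ ^ 2 : ℝ) : ℂ) := by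
  constructor
  · intro l m hl hm
    rw [Complex.conj_ofReal]
    norm_cast
    have hsymm : pseudoHypDistSq m l = pseudoHypDistSq l m := by
      unfold pseudoHypDistSq
      rw [norm_div, norm_div, norm_sub_rev]
      have : ‖1 - conj l * m‖ = ‖1 - conj m * l‖ := by
        rw [← Complex.norm_conj (1 - conj l * m)]
        congr 1
        simp only [map_sub, map_one, map_mul, Complex.conj_conj]
        ring
      rw [this]
    rw [hsymm]; ring
  · intro n l hl c
    -- abbreviations
    set A : Fin n → ℂ := fun i => (‖l i‖ : ℂ) ^ 2 with hA
    set d : Fin n → ℂ := fun i => c i * (1 - A i) with hd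
    set g : Fin n → Fin n → ℕ × ℕ → ℂ :=
      fun i j p => (d i * kerF (l i) p) * conj (d j * kerF (l j) p) with hg
    have hgs : ∀ i j, Summable (g i j) := by
      intro i j
      refine ((kerF_summable (hl i) (hl j)).mul_left (d i * conj (d j))).congr fun p => ?_
      simp only [hg, map_mul]
      ring
    -- pointwise rewriting of the kernel
    have hpt : ∀ i j, c i * conj (c j) *
        ((-pseudoHypDistSq (l i) (l j)
          + ‖l i‖ ^ 2 + ‖l j‖ ^ 2 : ℝ) : ℂ)
        = (c i * A i) * conj (c j * A j) - d i * conj (d j) + ∑' p, g i j p := by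
      intro i j
      rw [key (hl i) (hl j)]
      have e : ∑' p, g i j p
          = (d i * conj (d j)) * ∑' p, kerF (l i) p * conj (kerF (l j) p) := by
        rw [← tsum_mul_left]
        refine tsum_congr fun p => ?_
        simp only [hg, map_mul]
        ring
      rw [e]
      simp only [hd, hA, map_mul, map_sub, map_one, map_pow, Complex.conj_ofReal]
      ring
    rw [Finset.sum_congr rfl fun i _ => Finset.sum_congr rfl fun j _ => hpt i j]
    -- split the double sum
    have hsplit : ∑ i, ∑ j, ((c i * A i) * conj (c j * A j) - d i * conj (d j) + ∑' p, g i j p)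
        = (∑ i, ∑ j, (c i * A i) * conj (c j * A j)) - (∑ i, ∑ j, d i * conj (d j))
          + ∑ i, ∑ j, ∑' p, g i j p := by
      simp [Finset.sum_add_distrib, Finset.sum_sub_distrib]
    rw [hsplit]
    -- the first two double sums are normSq of single sums
    have hfirst : ∑ i, ∑ j, (c i * A i) * conj (c j * A j)
        = (Complex.normSq (∑ i, c i * A i) : ℂ) := by
      rw [← Complex.mul_conj, map_sum, Finset.sum_mul_sum]
    have hsecond : ∑ i, ∑ j, d i * conj (d j)
        = (Complex.normSq (∑ i, d i) : ℂ) := by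
      rw [← Complex.mul_conj, map_sum, Finset.sum_mul_sum]
    -- swap the double sum with the tsum
    have hswap : ∑ i, ∑ j, ∑' p, g i j p = ∑' p, ∑ i, ∑ j, g i j p := by
      rw [Summable.tsum_finsetSum fun i _ => summable_sum fun j _ => hgs i j]
      exact Finset.sum_congr rfl fun i _ => (Summable.tsum_finsetSum fun j _ => hgs i j).symm
    have hsq : ∀ p : ℕ × ℕ, ∑ i, ∑ j, g i j p
        = (Complex.normSq (∑ i, d i * kerF (l i) p) : ℂ) := by
      intro p
      rw [← Complex.mul_conj, map_sum, Finset.sum_mul_sum]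
    set r : ℕ × ℕ → ℝ := fun p => Complex.normSq (∑ i, d i * kerF (l i) p) with hr
    have hrs : Summable r := by
      rw [← Complex.summable_ofReal]
      refine (summable_sum fun (i : Fin n) (_ : i ∈ Finset.univ) =>
        summable_sum fun (j : Fin n) (_ : j ∈ Finset.univ) => hgs i j).congr fun p => ?_
      exact hsq p
    have htsum : ∑' p, ∑ i, ∑ j, g i j p = ((∑' p, r p : ℝ) : ℂ) := by
      rw [Complex.ofReal_tsum]
      exact tsum_congr hsq
    rw [hfirst, hsecond, hswap, htsum]
    have hT : Complex.normSq (∑ i, d i) ≤ ∑' p, r p := by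
      have h0 : r (0, 0) = Complex.normSq (∑ i, d i) := by
        simp [hr, kerF]
      rw [← h0]
      exact Summable.le_tsum hrs (0, 0) fun j _ => Complex.normSq_nonneg _
    have : ((Complex.normSq (∑ i, c i * A i) : ℝ) : ℂ)
        - ((Complex.normSq (∑ i, d i) : ℝ) : ℂ) + ((∑' p, r p : ℝ) : ℂ)
        = ((Complex.normSq (∑ i, c i * A i) - Complex.normSq (∑ i, d i) + ∑' p, r p : ℝ) : ℂ) := by
      push_cast; ring
    rw [this, Complex.zero_le_real]
    have := Complex.normSq_nonneg (∑ i, c i * A i)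
    linarith
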